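/- Suppose (x*_I, x*_C) ∈ X_MO maximizes z̄ᵏ(C_I^{1:ℓ} x_I + C_C^{1:ℓ} x_C) − (c⁰_I·x_I + c⁰_C·x_C) over X_MO, and suppose the optimal value θ = z̄ᵏ(C_I^{1:ℓ} x*_I + C_C^{1:ℓ} x*_C) − (c⁰_I·x*_I + c⁰_C·x*_C) is strictly positive. Then x*_I ∉ 𝒮ᵏ. -/

import Mathlib

open Matrix Filter Topology Set

noncomputable section

/-- Primal feasibility for the restricted LP with data `(ζ, β)`. -/
def LPfeas {l m nc : ℕ} (CC : Matrix (Fin l) (Fin nc) ℝ) (AC : Matrix (Fin m) (Fin nc) ℝ)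
    (ζ : Fin l → ℝ) (β : Fin m → ℝ) (x : Fin nc → ℝ) : Prop :=
  (∀ j, 0 ≤ x j) ∧ CC.mulVec x ≤ ζ ∧ AC.mulVec x = β

/-- The restricted LP value function, taking the value `+∞` when infeasible. -/
def zLP {l m nc : ℕ} (cC : Fin nc → ℝ) (CC : Matrix (Fin l) (Fin nc) ℝ)
    (AC : Matrix (Fin m) (Fin nc) ℝ) (ζ : Fin l → ℝ) (β : Fin m → ℝ) : EReal :=
  sInf {y : EReal | ∃ x : Fin nc → ℝ, LPfeas CC AC ζ β x ∧ y = ((cC ⬝ᵥ x : ℝ) : EReal)}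

/-- The finite domain (feasibility region) of the restricted LP value function. -/
def CLP {l m nc : ℕ} (CC : Matrix (Fin l) (Fin nc) ℝ) (AC : Matrix (Fin m) (Fin nc) ℝ)
    (β : Fin m → ℝ) : Set (Fin l → ℝ) :=
  {ζ | ∃ x : Fin nc → ℝ, LPfeas CC AC ζ β x}

/-- The dual feasible region `P_D`. -/
def PD {l m nc : ℕ} (cC : Fin nc → ℝ) (CC : Matrix (Fin l) (Fin nc) ℝ)
    (AC : Matrix (Fin m) (Fin nc) ℝ) : Set ((Fin l → ℝ) × (Fin m → ℝ)) :=
  {uv | uv.1 ≤ 0 ∧ CC.transpose.mulVec uv.1 + AC.transpose.mulVec uv.2 ≤ cC}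

/-- Projection of the optimal face of the dual LP onto the `u`-coordinates. -/
def projOPT {l m nc : ℕ} (cC : Fin nc → ℝ) (CC : Matrix (Fin l) (Fin nc) ℝ)
    (AC : Matrix (Fin m) (Fin nc) ℝ) (ζ : Fin l → ℝ) (β : Fin m → ℝ) : Set (Fin l → ℝ) :=
  {u | ∃ v : Fin m → ℝ, (u, v) ∈ PD cC CC AC ∧
    ((ζ ⬝ᵥ u + β ⬝ᵥ v : ℝ) : EReal) = zLP cC CC AC ζ β}

/-- A real vector with natural-number entries. -/
def IsNatVec {r : ℕ} (x : Fin r → ℝ) : Prop := ∀ i, ∃ k : ℕ, x i = (k : ℝ)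

/-- The MILP feasible region `X_MO`. -/
def XMO {m nc r : ℕ} (AI : Matrix (Fin m) (Fin r) ℝ) (AC : Matrix (Fin m) (Fin nc) ℝ)
    (b : Fin m → ℝ) : Set ((Fin r → ℝ) × (Fin nc → ℝ)) :=
  {p | IsNatVec p.1 ∧ (∀ j, 0 ≤ p.2 j) ∧ AI.mulVec p.1 + AC.mulVec p.2 = b}

/-- The restricted feasible region `S(ζ)`. -/
def Sreg {l m nc r : ℕ} (AI : Matrix (Fin m) (Fin r) ℝ) (AC : Matrix (Fin m) (Fin nc) ℝ)
    (b : Fin m → ℝ) (CI : Matrix (Fin l) (Fin r) ℝ) (CC : Matrix (Fin l) (Fin nc) ℝ)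
    (ζ : Fin l → ℝ) : Set ((Fin r → ℝ) × (Fin nc → ℝ)) :=
  {p ∈ XMO AI AC b | CI.mulVec p.1 + CC.mulVec p.2 ≤ ζ}

/-- The restricted value function `z`, taking the value `+∞` when `S(ζ) = ∅`. -/
def zRVF {l m nc r : ℕ} (cI : Fin r → ℝ) (cC : Fin nc → ℝ) (AI : Matrix (Fin m) (Fin r) ℝ)
    (AC : Matrix (Fin m) (Fin nc) ℝ) (b : Fin m → ℝ) (CI : Matrix (Fin l) (Fin r) ℝ)
    (CC : Matrix (Fin l) (Fin nc) ℝ) (ζ : Fin l → ℝ) : EReal :=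
  sInf {y : EReal | ∃ p ∈ Sreg AI AC b CI CC ζ, y = ((cI ⬝ᵥ p.1 + cC ⬝ᵥ p.2 : ℝ) : EReal)}

/-- The finite domain `𝒞` of the restricted value function. -/
def Cdom {l m nc r : ℕ} (AI : Matrix (Fin m) (Fin r) ℝ) (AC : Matrix (Fin m) (Fin nc) ℝ)
    (b : Fin m → ℝ) (CI : Matrix (Fin l) (Fin r) ℝ) (CC : Matrix (Fin l) (Fin nc) ℝ) :
    Set (Fin l → ℝ) :=
  {ζ | (Sreg AI AC b CI CC ζ).Nonempty}

/-- The set `S_I` of integer parts of feasible solutions. -/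
def SI {m nc r : ℕ} (AI : Matrix (Fin m) (Fin r) ℝ) (AC : Matrix (Fin m) (Fin nc) ℝ)
    (b : Fin m → ℝ) : Set (Fin r → ℝ) :=
  {xI | ∃ xC : Fin nc → ℝ, (xI, xC) ∈ XMO AI AC b}

/-- The bounding function `z̄(ζ; x̂_I)`. -/
def zbar {l m nc r : ℕ} (cI : Fin r → ℝ) (cC : Fin nc → ℝ) (AI : Matrix (Fin m) (Fin r) ℝ)
    (AC : Matrix (Fin m) (Fin nc) ℝ) (b : Fin m → ℝ) (CI : Matrix (Fin l) (Fin r) ℝ)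
    (CC : Matrix (Fin l) (Fin nc) ℝ) (ζ : Fin l → ℝ) (xI : Fin r → ℝ) : EReal :=
  ((cI ⬝ᵥ xI : ℝ) : EReal) + zLP cC CC AC (ζ - CI.mulVec xI) (b - AI.mulVec xI)

/-- The set `S*_I(ζ)` of integer parts whose bounding function is active at `ζ`. -/
def SstarI {l m nc r : ℕ} (cI : Fin r → ℝ) (cC : Fin nc → ℝ) (AI : Matrix (Fin m) (Fin r) ℝ)
    (AC : Matrix (Fin m) (Fin nc) ℝ) (b : Fin m → ℝ) (CI : Matrix (Fin l) (Fin r) ℝ)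
    (CC : Matrix (Fin l) (Fin nc) ℝ) (ζ : Fin l → ℝ) : Set (Fin r → ℝ) :=
  {xI ∈ SI AI AC b | zbar cI cC AI AC b CI CC ζ xI = zRVF cI cC AI AC b CI CC ζ}

/-- A description of the restricted value function. -/
def IsDescription {l m nc r : ℕ} (cI : Fin r → ℝ) (cC : Fin nc → ℝ)
    (AI : Matrix (Fin m) (Fin r) ℝ) (AC : Matrix (Fin m) (Fin nc) ℝ) (b : Fin m → ℝ)
    (CI : Matrix (Fin l) (Fin r) ℝ) (CC : Matrix (Fin l) (Fin nc) ℝ)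
    (S : Set (Fin r → ℝ)) : Prop :=
  S ⊆ SI AI AC b ∧
  ∀ ζ ∈ Cdom AI AC b CI CC, ∃ xI ∈ S, ∃ xC : Fin nc → ℝ,
    (xI, xC) ∈ Sreg AI AC b CI CC ζ ∧
    ((cI ⬝ᵥ xI + cC ⬝ᵥ xC : ℝ) : EReal) = zRVF cI cC AI AC b CI CC ζ

/-- A minimal description of the restricted value function. -/
def IsMinimalDescription {l m nc r : ℕ} (cI : Fin r → ℝ) (cC : Fin nc → ℝ)
    (AI : Matrix (Fin m) (Fin r) ℝ) (AC : Matrix (Fin m) (Fin nc) ℝ) (b : Fin m → ℝ)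
    (CI : Matrix (Fin l) (Fin r) ℝ) (CC : Matrix (Fin l) (Fin nc) ℝ)
    (S : Set (Fin r → ℝ)) : Prop :=
  IsDescription cI cC AI AC b CI CC S ∧
  ∀ S' : Set (Fin r → ℝ), S' ⊂ S → ¬ IsDescription cI cC AI AC b CI CC S'

/-- One-sided directional derivative (as a limit in `EReal`). -/
def HasDirDeriv {l : ℕ} (f : (Fin l → ℝ) → EReal) (x d : Fin l → ℝ) (L : EReal) : Prop :=
  Tendsto (fun t : ℝ => ((t⁻¹ : ℝ) : EReal) * (f (x + t • d) - f x)) (𝓝[>] (0 : ℝ)) (𝓝 L)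

/-- The criterion-space vector `Cx ∈ ℝ^{ℓ+1}` of a feasible point. -/
def CritVec {l nc r : ℕ} (cI : Fin r → ℝ) (cC : Fin nc → ℝ) (CI : Matrix (Fin l) (Fin r) ℝ)
    (CC : Matrix (Fin l) (Fin nc) ℝ) (p : (Fin r → ℝ) × (Fin nc → ℝ)) : ℝ × (Fin l → ℝ) :=
  (cI ⬝ᵥ p.1 + cC ⬝ᵥ p.2, CI.mulVec p.1 + CC.mulVec p.2)

/-- Efficient solutions of the multiobjective MILP. -/
def IsEfficient {l m nc r : ℕ} (cI : Fin r → ℝ) (cC : Fin nc → ℝ)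
    (AI : Matrix (Fin m) (Fin r) ℝ) (AC : Matrix (Fin m) (Fin nc) ℝ) (b : Fin m → ℝ)
    (CI : Matrix (Fin l) (Fin r) ℝ) (CC : Matrix (Fin l) (Fin nc) ℝ)
    (p : (Fin r → ℝ) × (Fin nc → ℝ)) : Prop :=
  p ∈ XMO AI AC b ∧ ¬ ∃ q ∈ XMO AI AC b,
    CritVec cI cC CI CC q ≤ CritVec cI cC CI CC p ∧
    CritVec cI cC CI CC q ≠ CritVec cI cC CI CC p

/-- The upper approximation `z̄ᵏ` built from a set `Sk` of integer parts and bound `U`. -/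
def zbark {l m nc r : ℕ} (cI : Fin r → ℝ) (cC : Fin nc → ℝ) (AI : Matrix (Fin m) (Fin r) ℝ)
    (AC : Matrix (Fin m) (Fin nc) ℝ) (b : Fin m → ℝ) (CI : Matrix (Fin l) (Fin r) ℝ)
    (CC : Matrix (Fin l) (Fin nc) ℝ) (Sk : Set (Fin r → ℝ)) (U : ℝ) (ζ : Fin l → ℝ) : EReal :=
  min (sInf {y : EReal | ∃ xI ∈ Sk, y = zbar cI cC AI AC b CI CC ζ xI}) (U : EReal)


theorem stmt_16 {l m nc r : ℕ} (cI : Fin r → ℝ) (cC : Fin nc → ℝ) (AI : Matrix (Fin m) (Fin r) ℝ)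
    (AC : Matrix (Fin m) (Fin nc) ℝ) (b : Fin m → ℝ) (CI : Matrix (Fin l) (Fin r) ℝ)
    (CC : Matrix (Fin l) (Fin nc) ℝ)
    (hne : (XMO AI AC b).Nonempty) (hbdd : Bornology.IsBounded (XMO AI AC b))
    (hbot : ∀ (ζ : Fin l → ℝ) (β : Fin m → ℝ), zLP cC CC AC ζ β ≠ ⊥)
    (Sk : Set (Fin r → ℝ)) (hSk : Sk ⊆ SI AI AC b) (hSkfin : Sk.Finite)
    (U : ℝ) (hU : ∀ ζ ∈ Cdom AI AC b CI CC, zRVF cI cC AI AC b CI CC ζ ≤ (U : EReal))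
    (xs : (Fin r → ℝ) × (Fin nc → ℝ)) (hxs : xs ∈ XMO AI AC b)
    (hmax : ∀ p ∈ XMO AI AC b,
      zbark cI cC AI AC b CI CC Sk U (CI.mulVec p.1 + CC.mulVec p.2) - ((cI ⬝ᵥ p.1 + cC ⬝ᵥ p.2 : ℝ) : EReal) ≤
        zbark cI cC AI AC b CI CC Sk U (CI.mulVec xs.1 + CC.mulVec xs.2) - ((cI ⬝ᵥ xs.1 + cC ⬝ᵥ xs.2 : ℝ) : EReal))
    (hpos : (0 : EReal) < zbark cI cC AI AC b CI CC Sk U (CI.mulVec xs.1 + CC.mulVec xs.2) - ((cI ⬝ᵥ xs.1 + cC ⬝ᵥ xs.2 : ℝ) : EReal)) :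
    xs.1 ∉ Sk := by
  intro hmem
  set ζ := CI.mulVec xs.1 + CC.mulVec xs.2 with hζ
  obtain ⟨hnat, hpos2, heq⟩ := hxs
  -- xs.2 is feasible for the LP defining zbar ζ xs.1
  have hfeas : LPfeas CC AC (ζ - CI.mulVec xs.1) (b - AI.mulVec xs.1) xs.2 := by
    refine ⟨hpos2, ?_, ?_⟩
    · intro i; simp [hζ]
    · funext i; have := congrFun heq i
      simp only [Pi.add_apply, Pi.sub_apply] at *
      linarith
  have hzLP : zLP cC CC AC (ζ - CI.mulVec xs.1) (b - AI.mulVec xs.1) ≤ ((cC ⬝ᵥ xs.2 : ℝ) : EReal) :=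
    sInf_le ⟨xs.2, hfeas, rfl⟩
  have hzbar : zbar cI cC AI AC b CI CC ζ xs.1 ≤ ((cI ⬝ᵥ xs.1 + cC ⬝ᵥ xs.2 : ℝ) : EReal) := by
    unfold zbar
    calc ((cI ⬝ᵥ xs.1 : ℝ) : EReal) + zLP cC CC AC (ζ - CI.mulVec xs.1) (b - AI.mulVec xs.1)
        ≤ ((cI ⬝ᵥ xs.1 : ℝ) : EReal) + ((cC ⬝ᵥ xs.2 : ℝ) : EReal) := add_le_add (le_refl _) hzLP
      _ = ((cI ⬝ᵥ xs.1 + cC ⬝ᵥ xs.2 : ℝ) : EReal) := by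
          rw [EReal.coe_add]
  have hzbark : zbark cI cC AI AC b CI CC Sk U ζ ≤ ((cI ⬝ᵥ xs.1 + cC ⬝ᵥ xs.2 : ℝ) : EReal) := by
    refine le_trans (min_le_left _ _) (le_trans (sInf_le ⟨xs.1, hmem, rfl⟩) hzbar)
  have : zbark cI cC AI AC b CI CC Sk U ζ - ((cI ⬝ᵥ xs.1 + cC ⬝ᵥ xs.2 : ℝ) : EReal) ≤ 0 := by
    have h2 := EReal.sub_le_sub hzbark (le_refl ((cI ⬝ᵥ xs.1 + cC ⬝ᵥ xs.2 : ℝ) : EReal))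
    rw [show ((cI ⬝ᵥ xs.1 + cC ⬝ᵥ xs.2 : ℝ) : EReal) - ((cI ⬝ᵥ xs.1 + cC ⬝ᵥ xs.2 : ℝ) : EReal)
        = ((0 : ℝ) : EReal) from by rw [← EReal.coe_sub]; norm_num] at h2
    exact_mod_cast h2
  exact absurd (lt_of_lt_of_le hpos this) (lt_irrefl _)
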